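/- There exists an infinite ternary square-free word w : ℕ → Fin 3 in which the letter frequencies exist and are unequal: lim_{n→∞} count_a(w↾n)/n = 11/36, lim_{n→∞} count_b(w↾n)/n = 13/36, and lim_{n→∞} count_c(w↾n)/n = 12/36, where w↾n is the prefix of w of length n. (Such a word is generated by the square-free substitution a → cacbcabacbab, b → cabacbcacbab, c → cbacbcabcbab.) -/

import Mathlib

/-- A word `w` is square-free if whenever `w = x ++ y ++ y ++ z`,
then `y` is the empty word. -/
def SquareFree {α : Type*} (w : List α) : Prop :=
  ∀ x y z : List α, w = x ++ y ++ y ++ z → y = []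

/-- The factor (contiguous subword) of an infinite word `w` of length `n`
starting at position `i`. -/
def factorWord (w : ℕ → Fin 3) (i n : ℕ) : List (Fin 3) :=
  (List.range n).map (fun j => w (i + j))

/-- A finite word `u` is a factor of the infinite word `w`. -/
def IsFactor (w : ℕ → Fin 3) (u : List (Fin 3)) : Prop :=
  ∃ i : ℕ, u = factorWord w i u.length

/-- An infinite ternary word is square-free if every finite factor of it
is square-free. -/
def InfSquareFree (w : ℕ → Fin 3) : Prop :=
  ∀ u : List (Fin 3), IsFactor w u → SquareFree u

namespace SqfAux

/-! ### The substitution -/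

def s : Fin 3 → List (Fin 3)
  | 0 => [2,0,2,1,2,0,1,0,2,1,0,1]
  | 1 => [2,0,1,0,2,1,2,0,2,1,0,1]
  | 2 => [2,1,0,2,1,2,0,1,2,1,0,1]

lemma length_s (a : Fin 3) : (s a).length = 12 := by fin_cases a <;> rfl

lemma length_flat (l : List (Fin 3)) : (l.flatMap s).length = 12 * l.length := by
  induction l with
  | nil => rfl
  | cons a l ih => simp [List.flatMap_cons, ih, length_s, Nat.mul_succ, Nat.mul_add]; ring

lemma flat_take (k : ℕ) (l : List (Fin 3)) :
    (l.take k).flatMap s = (l.flatMap s).take (12*k) := by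
  induction l generalizing k with
  | nil => simp
  | cons a l ih =>
    cases k with
    | zero => simp
    | succ k =>
      simp only [List.take_succ_cons, List.flatMap_cons, ih]
      rw [show 12*(k+1) = (s a).length + 12*k by rw [length_s]; ring, List.take_length_add_append]

lemma flat_drop (k : ℕ) (l : List (Fin 3)) :
    (l.drop k).flatMap s = (l.flatMap s).drop (12*k) := by
  induction l generalizing k with
  | nil => simp
  | cons a l ih =>
    cases k with
    | zero => simp
    | succ k =>
      simp only [List.drop_succ_cons, List.flatMap_cons, ih]
      rw [show 12*(k+1) = (s a).length + 12*k by rw [length_s]; ring, List.drop_length_add_append]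

lemma flat_getD (l : List (Fin 3)) (t i : ℕ) (ht : t < l.length) (hi : i < 12) :
    (l.flatMap s).getD (12*t+i) 0 = (s (l.getD t 0)).getD i 0 := by
  induction l generalizing t with
  | nil => simp at ht
  | cons a l ih =>
    cases t with
    | zero =>
      simp only [List.flatMap_cons, Nat.mul_zero, Nat.zero_add]
      rw [List.getD_append _ _ _ _ (by rw [length_s]; exact hi)]
      rfl
    | succ t =>
      simp only [List.flatMap_cons]
      rw [show 12*(t+1)+i = (s a).length + (12*t+i) by rw [length_s]; ring,
        List.getD_append_right _ _ _ _ (Nat.le_add_right _ _)]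
      simp only [Nat.add_sub_cancel_left]
      exact ih t (by simpa using ht)

/-! ### Square-freeness utilities -/

def NoSq (l : List (Fin 3)) : Prop :=
  ∀ p < l.length, ∀ m < l.length, 0 < m → p + 2*m ≤ l.length →
    ∃ i < m, l.getD (p+i) 0 ≠ l.getD (p+i+m) 0

def SqfSlice (l : List (Fin 3)) : Prop :=
  ∀ m < l.length, 0 < m → ∀ p < l.length, p + 2*m ≤ l.length →
    (l.drop p).take m ≠ (l.drop (p+m)).take m

instance : DecidablePred SqfSlice := fun l => by unfold SqfSlice; infer_instance

lemma noSq_squareFree {l : List (Fin 3)} (h : NoSq l) : SquareFree l := by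
  intro x y z hxyz
  by_contra hy
  have hm : 0 < y.length := List.length_pos_iff.2 hy
  have hlen : l.length = x.length + (y.length + (y.length + z.length)) := by
    subst hxyz; simp
  obtain ⟨i, him, hne⟩ := h x.length (by omega) y.length (by omega) hm (by omega)
  apply hne
  have hl' : l = x ++ (y ++ (y ++ z)) := by simp [hxyz]
  have h1 : l.getD (x.length + i) 0 = y.getD i 0 := by
    rw [hl', List.getD_append_right _ _ _ _ (Nat.le_add_right _ _)]
    simp only [Nat.add_sub_cancel_left]
    exact List.getD_append _ _ _ _ (by omega)
  have h2 : l.getD (x.length + i + y.length) 0 = y.getD i 0 := by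
    rw [hl', show x.length + i + y.length = x.length + (i + y.length) by ring,
      List.getD_append_right _ _ _ _ (Nat.le_add_right _ _)]
    simp only [Nat.add_sub_cancel_left]
    rw [List.getD_append_right _ _ _ _ (by omega),
      show i + y.length - y.length = i by omega]
    exact List.getD_append _ _ _ _ (by omega)
  rw [h1, h2]

lemma slice_eq_of_pointwise {l : List (Fin 3)} {a k : ℕ}
    (h : ∀ t, a ≤ t → t < a + k → l.getD t 0 = l.getD (t+k) 0)
    (hb : a + 2*k ≤ l.length) :
    (l.drop a).take k = (l.drop (a+k)).take k := by
  apply List.ext_getElem (by simp; omega)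
  intro i h1 h2
  simp only [List.getElem_take, List.getElem_drop]
  have hik : i < k := by simp at h1; omega
  rw [← List.getD_eq_getElem l 0 (by omega), ← List.getD_eq_getElem l 0 (by omega),
    show a + k + i = a + i + k by ring]
  exact h (a+i) (by omega) (by omega)

lemma slice_eq_not_squareFree {l : List (Fin 3)} {a k : ℕ}
    (hyy : (l.drop a).take k = (l.drop (a+k)).take k)
    (hk : 0 < k) (hb : a + 2*k ≤ l.length) : ¬ SquareFree l := by
  intro hs
  have hdecomp : l = l.take a ++ (l.drop a).take k ++ (l.drop (a+k)).take k
      ++ l.drop (a+2*k) := by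
    conv_lhs => rw [← List.take_append_drop (a+2*k) l]
    rw [show a + 2*k = (a+k) + k by ring, List.take_add, List.take_add,
      ← List.drop_drop, ← List.drop_drop]
  have hnil := hs (l.take a) ((l.drop a).take k) (l.drop (a+2*k))
    (by rw [← hyy] at hdecomp; exact hdecomp)
  have : ((l.drop a).take k).length = k := by simp; omega
  rw [hnil] at this; simp at this; omega

lemma pointwise_not_squareFree {l : List (Fin 3)} {a k : ℕ}
    (h : ∀ t, a ≤ t → t < a + k → l.getD t 0 = l.getD (t+k) 0)
    (hk : 0 < k) (hb : a + 2*k ≤ l.length) : ¬ SquareFree l :=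
  slice_eq_not_squareFree (slice_eq_of_pointwise h hb) hk hb

lemma squareFree_sqfSlice {l : List (Fin 3)} (h : SquareFree l) : SqfSlice l :=
  fun m _ hm p _ hb heq => slice_eq_not_squareFree heq hm hb h

lemma adjacent_ne {l : List (Fin 3)} (h : SquareFree l) {t : ℕ} (ht : t + 2 ≤ l.length) :
    l.getD t 0 ≠ l.getD (t+1) 0 := by
  intro he
  refine pointwise_not_squareFree (a := t) (k := 1) ?_ one_pos (by omega) h
  intro q hq1 hq2
  have : q = t := by omega
  subst this; exact he

lemma squareFree_of_append {a u b : List (Fin 3)} (h : SquareFree (a ++ u ++ b)) :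
    SquareFree u := by
  intro x y z hu
  exact h (a ++ x) y (z ++ b) (by subst hu; simp [List.append_assoc])

lemma squareFree_take_drop {l : List (Fin 3)} (h : SquareFree l) (i k : ℕ) :
    SquareFree ((l.drop i).take k) := by
  apply squareFree_of_append (a := l.take i) (b := (l.drop i).drop k)
  rwa [List.append_assoc, List.take_append_drop, List.take_append_drop]

/-! ### Decidable checks on the substitution -/

lemma inj_s : ∀ x y : Fin 3, (∀ i < 12, (s x).getD i 0 = (s y).getD i 0) → x = y := by
  decide

lemma suffix_det : ∀ x y : Fin 3,
    (∀ i < 12, 6 ≤ i → (s x).getD i 0 = (s y).getD i 0) → x = y := by decide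

lemma prefix_det : ∀ x y : Fin 3,
    (∀ i < 7, (s x).getD i 0 = (s y).getD i 0) → x = y := by decide

lemma sync_check : ∀ x y z : Fin 3, x ≠ y → ∀ j < 12, 0 < j →
    ¬(∀ i < 12, (if j + i < 12 then (s x).getD (j+i) 0 else (s y).getD (j+i-12) 0)
       = (s z).getD i 0) := by decide

set_option maxRecDepth 1000000 in
set_option maxHeartbeats 8000000 in
lemma small_check4 : ∀ a b c d : Fin 3, SqfSlice [a,b,c,d] →
    SqfSlice (([a,b,c,d] : List (Fin 3)).flatMap s) := by decide

set_option maxRecDepth 1000000 in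
set_option maxHeartbeats 8000000 in
lemma small_check3 : ∀ a b c : Fin 3, SqfSlice [a,b,c] →
    SqfSlice (([a,b,c] : List (Fin 3)).flatMap s) := by decide

set_option maxRecDepth 1000000 in
set_option maxHeartbeats 1000000 in
lemma small_check2 : ∀ a b : Fin 3, SqfSlice [a,b] →
    SqfSlice (([a,b] : List (Fin 3)).flatMap s) := by decide

set_option maxRecDepth 100000 in
lemma small_check1 : ∀ a : Fin 3, SqfSlice (([a] : List (Fin 3)).flatMap s) := by decide

lemma small_check : ∀ u : List (Fin 3), u.length ≤ 4 → SqfSlice u →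
    SqfSlice (u.flatMap s) := by
  intro u hlen hsq
  rcases u with _|⟨a,_|⟨b,_|⟨c,_|⟨d,_|⟨e,t⟩⟩⟩⟩⟩
  · decide
  · exact small_check1 a
  · exact small_check2 a b hsq
  · exact small_check3 a b c hsq
  · exact small_check4 a b c d hsq
  · simp at hlen; omega

/-! ### The substitution preserves square-freeness -/

theorem flat_squareFree {v : List (Fin 3)} (hv : SquareFree v) :
    SquareFree (v.flatMap s) := by
  apply noSq_squareFree
  intro p hp m hm hm0 hb
  by_contra hc
  push_neg at hc
  have hlen : (v.flatMap s).length = 12 * v.length := length_flat v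
  have hb' : p + 2*m ≤ 12 * v.length := by omega
  have heq : ∀ q, p ≤ q → q < p + m →
      (v.flatMap s).getD q 0 = (v.flatMap s).getD (q+m) 0 := by
    intro q h1 h2
    have := hc (q - p) (by omega)
    simpa [show p + (q-p) = q by omega] using this
  -- t0 : index of the first full block inside the first period
  obtain ⟨t0, ht1, ht2⟩ : ∃ t0, p ≤ 12*t0 ∧ 12*t0 ≤ p + 11 := by
    refine ⟨(p+11)/12, ?_, ?_⟩ <;> omega
  by_cases hcase : 12*t0 - p + 12 ≤ m
  · -- big case : the square is long enough to contain a full block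
    have ht0v : t0 < v.length := by omega
    have hocc : ∀ i' < 12,
        (v.flatMap s).getD (12*t0 + m + i') 0 = (s (v.getD t0 0)).getD i' 0 := by
      intro i' hi'
      have h1 := heq (12*t0 + i') (by omega) (by omega)
      rw [show 12*t0 + i' + m = 12*t0 + m + i' by ring] at h1
      rw [← h1, flat_getD v t0 i' ht0v hi']
    have hsync : (12*t0 + m) % 12 = 0 := by
      by_contra hj0
      obtain ⟨k, j', hkj, hj1, hj2⟩ : ∃ k j', 12*k + j' = 12*t0 + m ∧ 0 < j' ∧ j' < 12 := by
        refine ⟨(12*t0+m)/12, (12*t0+m)%12, ?_, ?_, ?_⟩ <;> omega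
      have hk1 : k + 1 < v.length := by omega
      apply sync_check (v.getD k 0) (v.getD (k+1) 0) (v.getD t0 0)
        (adjacent_ne hv (by omega)) j' hj2 hj1
      intro i' hi'
      rw [← hocc i' hi']
      by_cases hlt : j' + i' < 12
      · rw [if_pos hlt, show 12*t0 + m + i' = 12*k + (j'+i') by omega,
          flat_getD v k (j'+i') (by omega) hlt]
      · rw [if_neg hlt, show 12*t0 + m + i' = 12*(k+1) + (j'+i'-12) by omega,
          flat_getD v (k+1) (j'+i'-12) (by omega) (by omega)]
    obtain ⟨m', hm'⟩ : 12 ∣ m := by omega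
    have hm'1 : 1 ≤ m' := by omega
    have claimA : ∀ t, p ≤ 12*t → 12*t + 12 ≤ p + m →
        v.getD t 0 = v.getD (t + m') 0 := by
      intro t ha hb2
      apply inj_s
      intro i' hi'
      rw [← flat_getD v t i' (by omega) hi', ← flat_getD v (t+m') i' (by omega) hi',
        show 12*(t+m') + i' = 12*t + i' + m by omega]
      exact heq _ (by omega) (by omega)
    by_cases he0 : 12*t0 = p
    · -- the square starts at a block boundary
      refine pointwise_not_squareFree (a := t0) (k := m') ?_ (by omega) (by omega) hv
      intro t h1 h2
      exact claimA t (by omega) (by omega)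
    · -- p is strictly inside a block
      have he1 : p < 12*t0 := by omega
      have ht0ge : 1 ≤ t0 := by omega
      have hm'2 : 2 ≤ m' := by omega
      by_cases he6 : 12*t0 - p ≥ 6
      · -- long suffix of the preceding block repeats : suffix determines the letter
        have hsf : v.getD (t0-1) 0 = v.getD (t0-1+m') 0 := by
          apply suffix_det
          intro i' hi12 hi6
          rw [← flat_getD v (t0-1) i' (by omega) hi12,
            ← flat_getD v (t0-1+m') i' (by omega) hi12,
            show 12*(t0-1+m') + i' = 12*(t0-1) + i' + m by omega]
          exact heq _ (by omega) (by omega)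
        refine pointwise_not_squareFree (a := t0-1) (k := m') ?_ (by omega) (by omega) hv
        intro t h1 h2
        by_cases ht : t = t0-1
        · subst ht; exact hsf
        · exact claimA t (by omega) (by omega)
      · -- long prefix repeats : prefix determines the letter
        have hpf : v.getD (t0+m'-1) 0 = v.getD (t0+2*m'-1) 0 := by
          apply prefix_det
          intro i' hi7
          rw [← flat_getD v (t0+m'-1) i' (by omega) (by omega),
            ← flat_getD v (t0+2*m'-1) i' (by omega) (by omega),
            show 12*(t0+2*m'-1) + i' = 12*(t0+m'-1) + i' + m by omega]
          exact heq _ (by omega) (by omega)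
        refine pointwise_not_squareFree (a := t0) (k := m') ?_ (by omega) (by omega) hv
        intro t h1 h2
        by_cases ht : t = t0+m'-1
        · subst ht
          rw [show t0+m'-1+m' = t0+2*m'-1 by omega]
          exact hpf
        · exact claimA t (by omega) (by omega)
  · -- small case : the square fits in four consecutive blocks
    have hwin : p % 12 + 2*m ≤ 48 := by omega
    have hiv : p/12 < v.length := by omega
    set u := (v.drop (p/12)).take 4 with hu_def
    have hu_sf : SquareFree u := squareFree_take_drop hv _ _
    have hu_len : u.length = min 4 (v.length - p/12) := by simp [hu_def]
    have hwin' : p % 12 + 2*m ≤ 12 * u.length := by omega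
    have hflat : u.flatMap s = ((v.flatMap s).drop (12*(p/12))).take (12*4) := by
      rw [hu_def, flat_take, flat_drop]
    have htr : ∀ t, t < 12 * u.length →
        (u.flatMap s).getD t 0 = (v.flatMap s).getD (12*(p/12) + t) 0 := by
      intro t ht
      rw [hflat, List.getD_eq_getElem?_getD, List.getElem?_take, if_pos (by omega),
        List.getElem?_drop, ← List.getD_eq_getElem?_getD]
    have hslice : ((u.flatMap s).drop (p % 12)).take m
        = ((u.flatMap s).drop (p % 12 + m)).take m := by
      apply slice_eq_of_pointwise
      · intro t h1 h2
        rw [htr t (by omega), htr (t+m) (by omega),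
          show 12*(p/12) + t = p + (t - p % 12) by omega,
          show 12*(p/12) + (t+m) = p + (t - p % 12) + m by omega]
        exact heq _ (by omega) (by omega)
      · rw [length_flat]; omega
    exact small_check u (by omega) (squareFree_sqfSlice hu_sf) m
      (by rw [length_flat]; omega) hm0 (p % 12) (by rw [length_flat]; omega)
      (by rw [length_flat]; omega) hslice


/-! ### The fixed point -/

def wd : ℕ → Fin 3
  | 0 => 2
  | (n+1) => (s (wd ((n+1)/12))).getD ((n+1) % 12) 0
decreasing_by exact Nat.div_lt_self (Nat.succ_pos n) (by norm_num)

lemma wd_block (q r : ℕ) (hr : r < 12) : wd (12*q + r) = (s (wd q)).getD r 0 := by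
  rcases hn : 12*q + r with _ | n
  · have hq : q = 0 := by omega
    have hr0 : r = 0 := by omega
    subst hq; subst hr0
    have h0 : wd 0 = 2 := by rw [wd]
    rw [h0]; rfl
  · have h1 : (n+1)/12 = q := by omega
    have h2 : (n+1) % 12 = r := by omega
    rw [wd, h1, h2]

lemma length_factorWord (w : ℕ → Fin 3) (i n : ℕ) : (factorWord w i n).length = n := by
  simp [factorWord]

lemma factorWord_add (w : ℕ → Fin 3) (i a b : ℕ) :
    factorWord w i (a + b) = factorWord w i a ++ factorWord w (i + a) b := by
  unfold factorWord
  rw [List.range_add, List.map_append, List.map_map]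
  congr 1
  apply List.map_congr_left
  intro x _
  simp only [Function.comp_apply]
  congr 1
  omega

lemma getD_list_eq {l : List (Fin 3)} {r : ℕ} (hr : r ≤ l.length) :
    (List.range r).map (fun j => l.getD j 0) = l.take r := by
  apply List.ext_getElem (by simp; omega)
  intro i h1 h2
  simp only [List.getElem_map, List.getElem_range, List.getElem_take]
  exact List.getD_eq_getElem l 0 (by simp at h1; omega)

lemma factorWord_block (q : ℕ) : factorWord wd (12*q) 12 = s (wd q) := by
  unfold factorWord
  have : ∀ j ∈ List.range 12, wd (12*q + j) = (s (wd q)).getD j 0 := by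
    intro j hj
    exact wd_block q j (List.mem_range.1 hj)
  rw [List.map_congr_left this, getD_list_eq (by simp [length_s])]
  rw [← length_s (wd q)]
  exact (s (wd q)).take_length

lemma F1 (q : ℕ) : factorWord wd 0 (12*q) = (factorWord wd 0 q).flatMap s := by
  induction q with
  | zero => rfl
  | succ q ih =>
    rw [show 12*(q+1) = 12*q + 12 by ring, factorWord_add, ih, Nat.zero_add,
      factorWord_block, show q + 1 = q + 1 from rfl, factorWord_add wd 0 q 1]
    have : factorWord wd (0+q) 1 = [wd q] := by simp [factorWord, List.range_succ]
    rw [this, List.flatMap_append]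
    simp

lemma factorWord_partial (q r : ℕ) (hr : r < 12) :
    factorWord wd (12*q) r = (s (wd q)).take r := by
  unfold factorWord
  have : ∀ j ∈ List.range r, wd (12*q + j) = (s (wd q)).getD j 0 := by
    intro j hj
    exact wd_block q j (by have := List.mem_range.1 hj; omega)
  rw [List.map_congr_left this, getD_list_eq (by rw [length_s]; omega)]

lemma F2 (n : ℕ) : factorWord wd 0 n
    = (factorWord wd 0 (n/12)).flatMap s ++ (s (wd (n/12))).take (n % 12) := by
  conv_lhs => rw [show n = 12*(n/12) + n % 12 by omega]
  rw [factorWord_add, F1, Nat.zero_add, factorWord_partial _ _ (by omega)]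

/-! ### Letter counts -/

lemma count_flat (l : List (Fin 3)) :
    (l.flatMap s).count 2 = 4 * l.length ∧
    (l.flatMap s).count 0 + l.count 2 = 4 * l.length ∧
    (l.flatMap s).count 1 = 4 * l.length + l.count 2 := by
  induction l with
  | nil => simp
  | cons a l ih =>
    obtain ⟨ih2, ih0, ih1⟩ := ih
    simp only [List.flatMap_cons, List.count_append, List.count_cons, List.length_cons]
    have ha2 : (s a).count 2 = 4 := by fin_cases a <;> decide
    have ha0 : (s a).count 0 + (if a == 2 then 1 else 0) = 4 := by fin_cases a <;> decide
    have ha1 : (s a).count 1 = 4 + (if a == 2 then 1 else 0) := by fin_cases a <;> decide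
    refine ⟨by omega, ?_, ?_⟩ <;> by_cases h : a == 2 <;> simp [h] at ha0 ha1 ⊢ <;> omega

lemma cpartial : ∀ y : Fin 3, ∀ r < 12,
    3 * (((s y).take r).count 2) ≤ r + 11 ∧ r ≤ 3 * (((s y).take r).count 2) + 11 := by
  decide

lemma apartial : ∀ y : Fin 3, ∀ r < 12,
    36 * (((s y).take r).count 0) ≤ 11*r + 144 ∧
    11*r ≤ 36 * (((s y).take r).count 0) + 144 := by decide

lemma bpartial : ∀ y : Fin 3, ∀ r < 12,
    36 * (((s y).take r).count 1) ≤ 13*r + 180 ∧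
    13*r ≤ 36 * (((s y).take r).count 1) + 180 := by decide

lemma count2_bound (n : ℕ) : 3 * ((factorWord wd 0 n).count 2) ≤ n + 11 ∧
    n ≤ 3 * ((factorWord wd 0 n).count 2) + 11 := by
  have h2 := (count_flat (factorWord wd 0 (n/12))).1
  have hlen := length_factorWord wd 0 (n/12)
  have hpart := cpartial (wd (n/12)) (n % 12) (by omega)
  rw [F2 n, List.count_append, h2, hlen]
  omega

lemma count0_bound (n : ℕ) : 36 * ((factorWord wd 0 n).count 0) ≤ 11 * n + 400 ∧
    11 * n ≤ 36 * ((factorWord wd 0 n).count 0) + 400 := by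
  have h0 := (count_flat (factorWord wd 0 (n/12))).2.1
  have hlen := length_factorWord wd 0 (n/12)
  have hpart := apartial (wd (n/12)) (n % 12) (by omega)
  have hq := count2_bound (n/12)
  rw [F2 n, List.count_append]
  omega

lemma count1_bound (n : ℕ) : 36 * ((factorWord wd 0 n).count 1) ≤ 13 * n + 400 ∧
    13 * n ≤ 36 * ((factorWord wd 0 n).count 1) + 400 := by
  have h1 := (count_flat (factorWord wd 0 (n/12))).2.2
  have hlen := length_factorWord wd 0 (n/12)
  have hpart := bpartial (wd (n/12)) (n % 12) (by omega)
  have hq := count2_bound (n/12)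
  rw [F2 n, List.count_append]
  omega


/-! ### Square-freeness of the infinite word -/

lemma singleton_squareFree (a : Fin 3) : SquareFree [a] := by
  intro x y z h
  have := congrArg List.length h
  simp at this
  exact List.length_eq_zero_iff.1 (by omega)

lemma pow_squareFree (k : ℕ) : SquareFree (factorWord wd 0 (12^k)) := by
  induction k with
  | zero =>
    have : factorWord wd 0 1 = [wd 0] := by simp [factorWord, List.range_succ]
    rw [pow_zero, this]
    exact singleton_squareFree _
  | succ k ih =>
    rw [pow_succ, Nat.mul_comm, F1]
    exact flat_squareFree ih

lemma prefix_squareFree (n : ℕ) : SquareFree (factorWord wd 0 n) := by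
  have h := pow_squareFree n
  rw [show (12:ℕ)^n = n + (12^n - n) by
      have := Nat.lt_pow_self (n := n) (by norm_num : 1 < 12); omega,
    factorWord_add] at h
  exact squareFree_of_append (a := []) (b := factorWord wd (0+n) (12^n - n))
    (by simpa using h)

lemma wd_infSquareFree : InfSquareFree wd := by
  intro u hu
  obtain ⟨i, hu⟩ := hu
  have h := prefix_squareFree (i + u.length)
  rw [factorWord_add, Nat.zero_add, ← hu] at h
  exact squareFree_of_append (a := factorWord wd 0 i) (b := []) (by simpa using h)

/-! ### Frequencies -/

lemma freq_tendsto (f : ℕ → ℕ) (a b K : ℕ) (hb : 0 < b)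
    (h1 : ∀ n, b * f n ≤ a * n + K) (h2 : ∀ n, a * n ≤ b * f n + K) :
    Filter.Tendsto (fun n : ℕ => (f n : ℝ) / n) Filter.atTop (nhds ((a : ℝ) / b)) := by
  have hKb : Filter.Tendsto (fun n : ℕ => ((K : ℝ)/b) * (1/n)) Filter.atTop (nhds 0) := by
    have := tendsto_one_div_atTop_nhds_zero_nat.const_mul ((K : ℝ)/b)
    simpa using this
  have key : Filter.Tendsto (fun n : ℕ => (f n : ℝ)/n - a/b) Filter.atTop (nhds 0) := by
    apply squeeze_zero_norm' (a := fun n : ℕ => ((K : ℝ)/b) * (1/n)) _ hKb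
    filter_upwards [Filter.eventually_ge_atTop 1] with n hn
    have hnR : (0 : ℝ) < n := by exact_mod_cast hn
    have hbR : (0 : ℝ) < b := by exact_mod_cast hb
    have e1 : (f n : ℝ)/n - a/b = ((b : ℝ) * f n - a * n)/(b*n) := by
      field_simp
    have hup : (b : ℝ) * f n - a * n ≤ K := by
      have h := h1 n
      have h' : ((b * f n : ℕ) : ℝ) ≤ ((a * n + K : ℕ) : ℝ) := by exact_mod_cast h
      push_cast at h'
      linarith
    have hlo : -(K : ℝ) ≤ (b : ℝ) * f n - a * n := by
      have h := h2 n
      have h' : ((a * n : ℕ) : ℝ) ≤ ((b * f n + K : ℕ) : ℝ) := by exact_mod_cast h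
      push_cast at h'
      linarith
    have habs : |(b : ℝ) * f n - a * n| ≤ K := abs_le.2 ⟨hlo, hup⟩
    have e2 : ((K : ℝ)/b) * (1/n) = K / (b*n) := by field_simp
    rw [Real.norm_eq_abs, e1, abs_div, abs_of_pos (by positivity : (0:ℝ) < (b:ℝ)*n), e2]
    exact div_le_div_of_nonneg_right habs (by positivity)
  have := key.add_const ((a : ℝ)/b)
  simp only [sub_add_cancel, zero_add] at this
  exact this

end SqfAux

theorem exists_infinite_squareFree_word_with_unequal_frequencies :
    ∃ w : ℕ → Fin 3, InfSquareFree w ∧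
      Filter.Tendsto (fun n : ℕ => ((factorWord w 0 n).count 0 : ℝ) / n)
        Filter.atTop (nhds (11 / 36)) ∧
      Filter.Tendsto (fun n : ℕ => ((factorWord w 0 n).count 1 : ℝ) / n)
        Filter.atTop (nhds (13 / 36)) ∧
      Filter.Tendsto (fun n : ℕ => ((factorWord w 0 n).count 2 : ℝ) / n)
        Filter.atTop (nhds (12 / 36)) := by
  refine ⟨SqfAux.wd, SqfAux.wd_infSquareFree, ?_, ?_, ?_⟩
  · have h := SqfAux.freq_tendsto (fun n => (factorWord SqfAux.wd 0 n).count 0) 11 36 400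
      (by norm_num) (fun n => (SqfAux.count0_bound n).1) (fun n => (SqfAux.count0_bound n).2)
    convert h using 2 <;> norm_num
  · have h := SqfAux.freq_tendsto (fun n => (factorWord SqfAux.wd 0 n).count 1) 13 36 400
      (by norm_num) (fun n => (SqfAux.count1_bound n).1) (fun n => (SqfAux.count1_bound n).2)
    convert h using 2 <;> norm_num
  · have h := SqfAux.freq_tendsto (fun n => (factorWord SqfAux.wd 0 n).count 2) 1 3 11
      (by norm_num) (fun n => by simpa using (SqfAux.count2_bound n).1)
      (fun n => by simpa using (SqfAux.count2_bound n).2)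
    convert h using 2 <;> norm_num
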